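/- Let 0 ≤ φ_l < φ_r and w > 0. Then the infimum of ∫_0^T |φ'(t)|² dt over all T > 0 and all absolutely continuous φ : [0,T] → [φ_l, φ_r] with φ(0) = φ_l, φ(T) = φ_r, and ∫_0^T φ(t) dt = w, equals (4/9)·(φ_r^{3/2} − φ_l^{3/2})²/w, and this infimum is attained (at T = 3w/(φ_l + √(φ_l φ_r) + φ_r) by a quadratic polynomial profile). -/

import Mathlib

open MeasureTheory Filter Set
open scoped ENNReal Topology


/-- The constraint set for STATEMENT 19: absolutely continuous profiles on `[0,T]`
(with a.e. derivative `dφ`) increasing from `φl` to `φr` within `[φl,φr]` with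
prescribed mass `w`. -/
def Admissible (φl φr w T : ℝ) (φ dφ : ℝ → ℝ) : Prop :=
  (∀ t ∈ Icc (0:ℝ) T, φ t ∈ Icc φl φr) ∧
  φ 0 = φl ∧ φ T = φr ∧
  IntegrableOn dφ (Icc 0 T) ∧
  (∀ t ∈ Icc (0:ℝ) T, φ t = φ 0 + ∫ s in (0:ℝ)..t, dφ s) ∧
  (∫ t in (0:ℝ)..T, φ t) = w

lemma sqrt_cube {x : ℝ} (hx : 0 ≤ x) : Real.sqrt x ^ 3 = x ^ ((3:ℝ)/2) := by
  rw [show ((3:ℝ)/2) = (1/2) * ((3:ℕ):ℝ) by push_cast; ring, Real.rpow_mul hx,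
    Real.rpow_natCast, ← Real.sqrt_eq_rpow]

lemma quad_attain {φl φr w : ℝ} (hφl : 0 ≤ φl) (hlr : φl < φr) (hw : 0 < w) :
    ∃ T : ℝ, T = 3 * w / (φl + Real.sqrt (φl * φr) + φr) ∧ 0 < T ∧
      ∃ φ dφ : ℝ → ℝ, Admissible φl φr w T φ dφ ∧
        (∃ A B C : ℝ, ∀ t ∈ Icc (0:ℝ) T, φ t = A * t ^ 2 + B * t + C) ∧
        (∫⁻ t in Ioc (0:ℝ) T, ENNReal.ofReal ((dφ t) ^ 2)) =
          ENNReal.ofReal ((4/9) * (φr ^ ((3:ℝ)/2) - φl ^ ((3:ℝ)/2)) ^ 2 / w) := by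
  have hφr : 0 < φr := hφl.trans_lt hlr
  set a := Real.sqrt φl with ha_def
  set b := Real.sqrt φr with hb_def
  have ha0 : 0 ≤ a := Real.sqrt_nonneg _
  have hb0 : 0 < b := Real.sqrt_pos.mpr hφr
  have ha2 : a ^ 2 = φl := Real.sq_sqrt hφl
  have hb2 : b ^ 2 = φr := Real.sq_sqrt hφr.le
  have hab : a < b := Real.sqrt_lt_sqrt hφl hlr
  have hs_eq : φl + Real.sqrt (φl * φr) + φr = a ^ 2 + a * b + b ^ 2 := by
    rw [Real.sqrt_mul hφl, ha2, hb2]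
  have hs_pos : 0 < a ^ 2 + a * b + b ^ 2 := by
    nlinarith [pow_pos hb0 2, mul_nonneg ha0 hb0.le, sq_nonneg a]
  set s := a ^ 2 + a * b + b ^ 2 with hs_def
  refine ⟨3 * w / (φl + Real.sqrt (φl * φr) + φr), rfl, ?_, ?_⟩
  · rw [hs_eq]; positivity
  set T := 3 * w / (φl + Real.sqrt (φl * φr) + φr) with hT_def
  have hT_eq : T = 3 * w / s := by rw [hT_def, hs_eq]
  have hT : 0 < T := by rw [hT_eq]; positivity
  set k := (b - a) / T with hk_def
  have hk : 0 < k := div_pos (by linarith) hT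
  have hkT : k * T = b - a := by rw [hk_def, div_mul_cancel₀ _ hT.ne']
  set Φ : ℝ → ℝ := fun t => (a + k * t) ^ 2 with hΦ_def
  set dΦ : ℝ → ℝ := fun t => 2 * k * (a + k * t) with hdΦ_def
  have hlin : ∀ t : ℝ, HasDerivAt (fun t : ℝ => a + k * t) k t := by
    intro t
    simpa using ((hasDerivAt_id t).const_mul k).const_add a
  have hderiv : ∀ t : ℝ, HasDerivAt Φ (dΦ t) t := by
    intro t
    have := (hlin t).pow 2
    refine this.congr_deriv ?_
    simp [hdΦ_def]; ring
  have hcont : Continuous dΦ := by fun_prop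
  have haT : a + k * T = b := by rw [hkT]; ring
  have hbound : ∀ t ∈ Icc (0:ℝ) T, a ≤ a + k * t ∧ a + k * t ≤ b := by
    rintro t ⟨h0, h1⟩
    constructor
    · nlinarith
    · nlinarith
  have hFTC : ∀ t1 t2 : ℝ, ∫ u in t1..t2, dΦ u = Φ t2 - Φ t1 := fun t1 t2 =>
    intervalIntegral.integral_eq_sub_of_hasDerivAt (fun u _ => hderiv u)
      (hcont.intervalIntegrable _ _)
  have hcube : b ^ 3 - a ^ 3 = (b - a) * s := by rw [hs_def]; ring
  have hmass : (∫ t in (0:ℝ)..T, Φ t) = w := by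
    have hF : ∀ t : ℝ, HasDerivAt (fun t => (a + k * t) ^ 3 / (3 * k)) (Φ t) t := by
      intro t
      have := ((hlin t).pow 3).div_const (3 * k)
      refine this.congr_deriv ?_
      rw [hΦ_def]
      field_simp
      ring
    have := intervalIntegral.integral_eq_sub_of_hasDerivAt (fun u _ => hF u)
      ((by fun_prop : Continuous Φ).intervalIntegrable 0 T)
    rw [this, haT]
    simp only [mul_zero, add_zero]
    have hk_eq : k = (b - a) * s / (3 * w) := by
      rw [hk_def, hT_eq]; field_simp
    have key : w * (3 * ((b - a) * s / (3 * w))) = (b - a) * s := by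
      field_simp
    rw [div_sub_div_same, div_eq_iff (by positivity : (3:ℝ) * k ≠ 0), hk_eq, key, hcube]
  have hΦ0 : Φ 0 = φl := by simp [hΦ_def, ha2]
  have hΦT : Φ T = φr := by simp only [hΦ_def, haT, hb2]
  refine ⟨Φ, dΦ, ⟨?_, hΦ0, hΦT, hcont.integrableOn_Icc, ?_, hmass⟩, ?_, ?_⟩
  · intro t ht
    obtain ⟨hl, hr⟩ := hbound t ht
    constructor
    · rw [← ha2]; exact pow_le_pow_left₀ ha0 hl 2
    · rw [← hb2]; exact pow_le_pow_left₀ (le_trans ha0 hl) hr 2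
  · intro t _
    rw [hFTC 0 t]; ring
  · exact ⟨k ^ 2, 2 * a * k, φl, fun t _ => by
      show (a + k * t) ^ 2 = _
      linear_combination ha2⟩
  · have hint2 : IntegrableOn (fun t => dΦ t ^ 2) (Ioc 0 T) :=
      ((hcont.pow 2).integrableOn_Icc).mono_set Ioc_subset_Icc_self
    rw [← ofReal_integral_eq_lintegral_ofReal hint2 (ae_of_all _ fun t => sq_nonneg _)]
    congr 1
    have h1 : (∫ t in Ioc (0:ℝ) T, dΦ t ^ 2) = ∫ t in (0:ℝ)..T, dΦ t ^ 2 :=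
      (intervalIntegral.integral_of_le hT.le).symm
    have hG : ∀ t : ℝ, HasDerivAt (fun t => (4 * k / 3) * (a + k * t) ^ 3) (dΦ t ^ 2) t := by
      intro t
      have := ((hlin t).pow 3).const_mul (4 * k / 3)
      refine this.congr_deriv ?_
      simp only [hdΦ_def]
      ring
    have h2 := intervalIntegral.integral_eq_sub_of_hasDerivAt (fun u _ => hG u)
      (((hcont.pow 2)).intervalIntegrable 0 T)
    rw [h1, h2, haT]
    simp only [mul_zero, add_zero]
    rw [← sqrt_cube hφl, ← sqrt_cube hφr.le, ← ha_def, ← hb_def]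
    have hk_eq : k = (b - a) * s / (3 * w) := by
      rw [hk_def, hT_eq]; field_simp
    rw [hk_eq]
    field_simp
    linear_combination (4/3 : ℝ) * (b^3 - a^3) * w * s * hcube

lemma energy_lower_bound {φl φr w T : ℝ} (hφl : 0 ≤ φl) (hlr : φl < φr) (hw : 0 < w)
    (hT : 0 < T) {φ dφ : ℝ → ℝ} (hA : Admissible φl φr w T φ dφ) :
    ENNReal.ofReal ((4/9) * (φr ^ ((3:ℝ)/2) - φl ^ ((3:ℝ)/2)) ^ 2 / w) ≤
      ∫⁻ t in Ioc (0:ℝ) T, ENNReal.ofReal ((dφ t) ^ 2) := by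
  obtain ⟨hrange, h0, hTv, hint, hftc, hmass⟩ := hA
  have hφr : 0 < φr := hφl.trans_lt hlr
  set a := Real.sqrt φl with ha_def
  set b := Real.sqrt φr with hb_def
  have ha0 : 0 ≤ a := Real.sqrt_nonneg _
  have hb0 : 0 < b := Real.sqrt_pos.mpr hφr
  have ha2 : a ^ 2 = φl := Real.sq_sqrt hφl
  have hb2 : b ^ 2 = φr := Real.sq_sqrt hφr.le
  have hab : a < b := Real.sqrt_lt_sqrt hφl hlr
  -- continuity of φ on [0, T]
  have hprim : ContinuousOn (fun t => φ 0 + ∫ s in (0:ℝ)..t, dφ s) (Icc 0 T) := by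
    apply continuousOn_const.add
    have h' : IntegrableOn dφ (uIcc (0:ℝ) T) := by rwa [uIcc_of_le hT.le]
    have := intervalIntegral.continuousOn_primitive_interval h'
    rwa [uIcc_of_le hT.le] at this
  have hφcont : ContinuousOn φ (Icc 0 T) := hprim.congr fun t ht => hftc t ht
  set μ0 := volume.restrict (Ioc (0:ℝ) T) with hμ0
  have hφm : AEMeasurable φ μ0 :=
    (hφcont.mono Ioc_subset_Icc_self).aemeasurable measurableSet_Ioc
  have hdint : IntegrableOn dφ (Ioc 0 T) := hint.mono_set Ioc_subset_Icc_self
  have hdm : AEMeasurable dφ μ0 := hdint.aemeasurable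
  set f : ℝ → ℝ≥0∞ := fun t => ENNReal.ofReal |dφ t| with hf_def
  set g : ℝ → ℝ≥0∞ := fun t => ENNReal.ofReal (Real.sqrt (φ t)) with hg_def
  have hf : AEMeasurable f μ0 :=
    ENNReal.measurable_ofReal.comp_aemeasurable (continuous_abs.measurable.comp_aemeasurable hdm)
  have hg : AEMeasurable g μ0 :=
    ENNReal.measurable_ofReal.comp_aemeasurable
      (Real.continuous_sqrt.measurable.comp_aemeasurable hφm)
  set A := ∫⁻ t in Ioc (0:ℝ) T, ENNReal.ofReal ((dφ t) ^ 2) with hA_def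
  have hφint : IntegrableOn φ (Ioc 0 T) :=
    (hφcont.integrableOn_Icc).mono_set Ioc_subset_Icc_self
  have hφnn : ∀ᵐ t ∂μ0, 0 ≤ φ t := by
    filter_upwards [ae_restrict_mem measurableSet_Ioc] with t ht
    exact hφl.trans (hrange t (Ioc_subset_Icc_self ht)).1
  have hW : (∫⁻ t in Ioc (0:ℝ) T, ENNReal.ofReal (φ t)) = ENNReal.ofReal w := by
    rw [← ofReal_integral_eq_lintegral_ofReal hφint hφnn]
    congr 1
    rw [intervalIntegral.integral_of_le hT.le] at hmass
    exact hmass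
  -- Hölder
  have hconj : Real.HolderConjugate 2 2 := Real.HolderConjugate.two_two
  have hHolder := ENNReal.lintegral_mul_le_Lp_mul_Lq μ0 hconj hf hg
  have hf2 : ∀ t, f t ^ (2:ℝ) = ENNReal.ofReal ((dφ t) ^ 2) := by
    intro t
    rw [hf_def, show ((2:ℝ)) = ((2:ℕ):ℝ) by norm_num, ENNReal.rpow_natCast,
      ← ENNReal.ofReal_pow (abs_nonneg _), sq_abs]
  have hg2 : ∀ᵐ t ∂μ0, g t ^ (2:ℝ) = ENNReal.ofReal (φ t) := by
    filter_upwards [hφnn] with t ht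
    rw [hg_def, show ((2:ℝ)) = ((2:ℕ):ℝ) by norm_num, ENNReal.rpow_natCast,
      ← ENNReal.ofReal_pow (Real.sqrt_nonneg _), Real.sq_sqrt ht]
  have hHolder' : (∫⁻ t, (f * g) t ∂μ0) ≤
      A ^ ((1:ℝ)/2) * (ENNReal.ofReal w) ^ ((1:ℝ)/2) := by
    have e1 : (∫⁻ t, f t ^ (2:ℝ) ∂μ0) = A := by
      rw [hA_def]; exact lintegral_congr fun t => hf2 t
    have e2 : (∫⁻ t, g t ^ (2:ℝ) ∂μ0) = ENNReal.ofReal w := by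
      rw [← hW]; exact lintegral_congr_ae hg2
    calc (∫⁻ t, (f * g) t ∂μ0)
        ≤ (∫⁻ t, f t ^ (2:ℝ) ∂μ0) ^ ((1:ℝ)/2) * (∫⁻ t, g t ^ (2:ℝ) ∂μ0) ^ ((1:ℝ)/2) := hHolder
      _ = A ^ ((1:ℝ)/2) * (ENNReal.ofReal w) ^ ((1:ℝ)/2) := by rw [e1, e2]
  -- layer cake lower bound
  set ν := μ0.withDensity f with hν_def
  have hcomp : (∫⁻ t, ENNReal.ofReal (Real.sqrt (φ t)) ∂ν) = ∫⁻ t, (f * g) t ∂μ0 :=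
    lintegral_withDensity_eq_lintegral_mul₀ hf hg
  have hsqm : AEMeasurable (fun t => Real.sqrt (φ t)) ν :=
    (Real.continuous_sqrt.measurable.comp_aemeasurable hφm).mono_ac
      (withDensity_absolutelyContinuous _ _)
  have hlayer := lintegral_eq_lintegral_meas_lt ν
    (ae_of_all _ fun t => Real.sqrt_nonneg (φ t)) hsqm
  -- pointwise level-set bound
  have hpoint : ∀ u ∈ Ioo (0:ℝ) b,
      ENNReal.ofReal (φr - max (u ^ 2) φl) ≤ ν {t | u < Real.sqrt (φ t)} := by
    intro u hu
    set c := max (u ^ 2) φl with hc_def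
    have hcl : φl ≤ c := le_max_right _ _
    have hcr : c < φr := by
      apply max_lt _ hlr
      have h2 : u ^ 2 < b ^ 2 := by nlinarith [hu.1, hu.2]
      rwa [hb2] at h2
    set S := Icc (0:ℝ) T ∩ φ ⁻¹' (Iic c) with hS_def
    have hS0 : (0:ℝ) ∈ S := ⟨left_mem_Icc.mpr hT.le, by simp [mem_preimage, h0, hcl]⟩
    have hSsub : S ⊆ Icc 0 T := inter_subset_left
    have hScl : IsClosed S :=
      hφcont.preimage_isClosed_of_isClosed isClosed_Icc isClosed_Iic
    have hScomp : IsCompact S := isCompact_Icc.of_isClosed_subset hScl hSsub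
    set τ := sSup S with hτ_def
    have hτS : τ ∈ S := hScomp.sSup_mem ⟨0, hS0⟩
    have hτ0 : 0 ≤ τ := le_csSup hScomp.bddAbove hS0
    have hτT : τ ≤ T := (hSsub hτS).2
    have hφτ : φ τ ≤ c := hτS.2
    have hsub2 : Ioc τ T ⊆ Icc (0:ℝ) T := fun x hx => ⟨hτ0.trans hx.1.le, hx.2⟩
    have hsub : Ioc τ T ⊆ {t | u < Real.sqrt (φ t)} := by
      intro t ht
      have htIcc : t ∈ Icc (0:ℝ) T := hsub2 ht
      have htS : t ∉ S := fun h => absurd (le_csSup hScomp.bddAbove h) (not_le.mpr ht.1)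
      have hφt : c < φ t := by
        by_contra h
        exact htS ⟨htIcc, not_lt.mp h⟩
      have hu2 : u ^ 2 < φ t := lt_of_le_of_lt (le_max_left _ _) hφt
      exact (Real.lt_sqrt hu.1.le).mpr hu2
    have hd1 : IntegrableOn dφ (Ioc τ T) := hint.mono_set hsub2
    have hstep1 : φr - c ≤ ∫ t in Ioc τ T, |dφ t| := by
      have hIτ : φ τ = φ 0 + ∫ s in (0:ℝ)..τ, dφ s := hftc τ ⟨hτ0, hτT⟩
      have hIT : φ T = φ 0 + ∫ s in (0:ℝ)..T, dφ s := hftc T (right_mem_Icc.mpr hT.le)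
      have hiT : IntervalIntegrable dφ volume 0 T := by
        rw [intervalIntegrable_iff_integrableOn_Icc_of_le hT.le]; exact hint
      have hiτ : IntervalIntegrable dφ volume 0 τ := by
        rw [intervalIntegrable_iff_integrableOn_Icc_of_le hτ0]
        exact hint.mono_set (Icc_subset_Icc le_rfl hτT)
      have hsplit : (∫ s in (0:ℝ)..T, dφ s) - ∫ s in (0:ℝ)..τ, dφ s = ∫ s in τ..T, dφ s :=
        intervalIntegral.integral_interval_sub_left hiT hiτ
      have hval : (∫ t in Ioc τ T, dφ t) = φ T - φ τ := by
        rw [← intervalIntegral.integral_of_le hτT, ← hsplit, hIT, hIτ]; ring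
      have hmono2 : (∫ t in Ioc τ T, dφ t) ≤ ∫ t in Ioc τ T, |dφ t| :=
        integral_mono hd1 hd1.abs fun t => le_abs_self _
      rw [hval, hTv] at hmono2
      linarith
    calc ENNReal.ofReal (φr - c) ≤ ENNReal.ofReal (∫ t in Ioc τ T, |dφ t|) :=
          ENNReal.ofReal_le_ofReal hstep1
      _ = ∫⁻ t in Ioc τ T, ENNReal.ofReal |dφ t| :=
          ofReal_integral_eq_lintegral_ofReal hd1.abs (ae_of_all _ fun t => abs_nonneg _)
      _ = ν (Ioc τ T) := by
          rw [hν_def, withDensity_apply _ measurableSet_Ioc, hμ0,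
            Measure.restrict_restrict measurableSet_Ioc,
            inter_eq_self_of_subset_left (Ioc_subset_Ioc_left hτ0)]
      _ ≤ ν {t | u < Real.sqrt (φ t)} := measure_mono hsub
  -- integrate the level-set bound
  have hIcont : Continuous (fun u : ℝ => φr - max (u ^ 2) φl) :=
    continuous_const.sub ((continuous_pow 2).max continuous_const)
  have hreal : (∫ u in Ioo (0:ℝ) b, (φr - max (u ^ 2) φl)) = (2/3) * (b ^ 3 - a ^ 3) := by
    rw [← integral_Ioc_eq_integral_Ioo, ← intervalIntegral.integral_of_le hb0.le]
    have hsplit := intervalIntegral.integral_add_adjacent_intervals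
      (μ := volume) (a := (0:ℝ)) (b := a) (c := b)
      (hIcont.intervalIntegrable 0 a) (hIcont.intervalIntegrable a b)
    rw [← hsplit]
    have e1 : (∫ u in (0:ℝ)..a, (φr - max (u ^ 2) φl)) = ∫ u in (0:ℝ)..a, (φr - φl) := by
      apply intervalIntegral.integral_congr
      intro u hu
      rw [uIcc_of_le ha0] at hu
      have : u ^ 2 ≤ φl := by rw [← ha2]; exact pow_le_pow_left₀ hu.1 hu.2 2
      simp [max_eq_right this]
    have e2 : (∫ u in a..b, (φr - max (u ^ 2) φl)) = ∫ u in a..b, (φr - u ^ 2) := by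
      apply intervalIntegral.integral_congr
      intro u hu
      rw [uIcc_of_le hab.le] at hu
      have : φl ≤ u ^ 2 := by rw [← ha2]; exact pow_le_pow_left₀ ha0 hu.1 2
      simp [max_eq_left this]
    rw [e1, e2, intervalIntegral.integral_const,
      intervalIntegral.integral_sub (intervalIntegrable_const)
        ((continuous_pow 2).intervalIntegrable a b),
      intervalIntegral.integral_const, integral_pow]
    have hφr' : φr = b ^ 2 := hb2.symm
    have hφl' : φl = a ^ 2 := ha2.symm
    rw [hφr', hφl']
    push_cast
    simp only [smul_eq_mul]
    ring
  have hlow : ENNReal.ofReal ((2/3) * (b ^ 3 - a ^ 3)) ≤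
      ∫⁻ u in Ioi (0:ℝ), ν {t | u < Real.sqrt (φ t)} := by
    have hLind : ∀ u : ℝ,
        (Ioo (0:ℝ) b).indicator (fun u => ENNReal.ofReal (φr - max (u ^ 2) φl)) u ≤
          ν {t | u < Real.sqrt (φ t)} := by
      intro u
      by_cases hu : u ∈ Ioo (0:ℝ) b
      · rw [indicator_of_mem hu]; exact hpoint u hu
      · rw [indicator_of_notMem hu]; exact zero_le
    calc ENNReal.ofReal ((2/3) * (b ^ 3 - a ^ 3))
        = ENNReal.ofReal (∫ u in Ioo (0:ℝ) b, (φr - max (u ^ 2) φl)) := by rw [hreal]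
      _ = ∫⁻ u in Ioo (0:ℝ) b, ENNReal.ofReal (φr - max (u ^ 2) φl) := by
          apply ofReal_integral_eq_lintegral_ofReal
            (hIcont.integrableOn_Ioc.mono_set Ioo_subset_Ioc_self)
          filter_upwards [ae_restrict_mem measurableSet_Ioo] with u hu
          have h2 : u ^ 2 < b ^ 2 := by nlinarith [hu.1, hu.2]
          rw [hb2] at h2
          have hlt : max (u ^ 2) φl < φr := max_lt h2 hlr
          show (0:ℝ) ≤ φr - max (u ^ 2) φl
          linarith
      _ = ∫⁻ u in Ioi (0:ℝ),
            (Ioo (0:ℝ) b).indicator (fun u => ENNReal.ofReal (φr - max (u ^ 2) φl)) u := by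
          rw [lintegral_indicator measurableSet_Ioo,
            Measure.restrict_restrict measurableSet_Ioo,
            inter_eq_self_of_subset_left Ioo_subset_Ioi_self]
      _ ≤ ∫⁻ u in Ioi (0:ℝ), ν {t | u < Real.sqrt (φ t)} := lintegral_mono hLind
  -- assemble
  have hkey : ENNReal.ofReal ((2/3) * (b ^ 3 - a ^ 3)) ≤
      A ^ ((1:ℝ)/2) * (ENNReal.ofReal w) ^ ((1:ℝ)/2) := by
    calc ENNReal.ofReal ((2/3) * (b ^ 3 - a ^ 3))
        ≤ ∫⁻ u in Ioi (0:ℝ), ν {t | u < Real.sqrt (φ t)} := hlow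
      _ = ∫⁻ t, ENNReal.ofReal (Real.sqrt (φ t)) ∂ν := hlayer.symm
      _ = ∫⁻ t, (f * g) t ∂μ0 := hcomp
      _ ≤ A ^ ((1:ℝ)/2) * (ENNReal.ofReal w) ^ ((1:ℝ)/2) := hHolder'
  rw [← sqrt_cube hφl, ← sqrt_cube hφr.le, ← ha_def, ← hb_def,
    ENNReal.ofReal_div_of_pos hw,
    ENNReal.div_le_iff (by simpa using hw) ENNReal.ofReal_ne_top]
  have hI0 : 0 ≤ (2/3) * (b ^ 3 - a ^ 3) := by
    have : a ^ 3 ≤ b ^ 3 := pow_le_pow_left₀ ha0 hab.le 3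
    linarith
  calc ENNReal.ofReal ((4/9) * (b ^ 3 - a ^ 3) ^ 2)
      = (ENNReal.ofReal ((2/3) * (b ^ 3 - a ^ 3))) ^ (2:ℝ) := by
        rw [ENNReal.ofReal_rpow_of_nonneg hI0 (by norm_num : (0:ℝ) ≤ 2)]
        congr 1
        rw [show ((2:ℝ)) = ((2:ℕ):ℝ) by norm_num, Real.rpow_natCast]
        ring
    _ ≤ (A ^ ((1:ℝ)/2) * (ENNReal.ofReal w) ^ ((1:ℝ)/2)) ^ (2:ℝ) :=
        ENNReal.rpow_le_rpow hkey (by norm_num)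
    _ = A * ENNReal.ofReal w := by
        rw [ENNReal.mul_rpow_of_nonneg _ _ (by norm_num : (0:ℝ) ≤ 2),
          ← ENNReal.rpow_mul, ← ENNReal.rpow_mul]
        norm_num


/-- the minimal Dirichlet energy of a monotone transition profile of mass `w`
between the levels `φl < φr` is `(4/9)(φr^{3/2} - φl^{3/2})²/w`, attained at
`T = 3w/(φl + √(φl·φr) + φr)` by a quadratic polynomial profile. -/
theorem minimal_transition_energy
    (φl φr w : ℝ) (hφl : 0 ≤ φl) (hlr : φl < φr) (hw : 0 < w) :
    IsLeast { E : ℝ≥0∞ | ∃ T : ℝ, 0 < T ∧ ∃ φ dφ : ℝ → ℝ,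
        Admissible φl φr w T φ dφ ∧
        E = ∫⁻ t in Ioc (0:ℝ) T, ENNReal.ofReal ((dφ t) ^ 2) }
      (ENNReal.ofReal ((4/9) * (φr ^ ((3:ℝ)/2) - φl ^ ((3:ℝ)/2)) ^ 2 / w)) ∧
    ∃ T : ℝ, T = 3 * w / (φl + Real.sqrt (φl * φr) + φr) ∧ 0 < T ∧
      ∃ φ dφ : ℝ → ℝ, Admissible φl φr w T φ dφ ∧
        (∃ A B C : ℝ, ∀ t ∈ Icc (0:ℝ) T, φ t = A * t ^ 2 + B * t + C) ∧
        (∫⁻ t in Ioc (0:ℝ) T, ENNReal.ofReal ((dφ t) ^ 2)) =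
          ENNReal.ofReal ((4/9) * (φr ^ ((3:ℝ)/2) - φl ^ ((3:ℝ)/2)) ^ 2 / w) := by
  obtain ⟨T, hTdef, hTpos, φ, dφ, hadm, hquad, hE⟩ := quad_attain hφl hlr hw
  constructor
  · constructor
    · exact ⟨T, hTpos, φ, dφ, hadm, hE.symm⟩
    · rintro E ⟨T', hT', φ', dφ', hadm', rfl⟩
      exact energy_lower_bound hφl hlr hw hT' hadm'
  · exact ⟨T, hTdef, hTpos, φ, dφ, hadm, hquad, hE⟩
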